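/- Let L = Rg₁ ⊕ Rg₂ be a free R-lattice of rank 2 over R = ℤ_(p)C_p with R-valued Hermitian Gram matrix [[pe₁, 1-σ], [1-σ^{-1}, pe₁]] where e₁ = (1/p)∑σ^i. Then L is not an elementary lattice: pL^# is not contained in L. -/

import Mathlib

open scoped BigOperators

set_option synthInstance.maxHeartbeats 1000000
set_option maxHeartbeats 1000000

abbrev Cp (p : ℕ) := Multiplicative (ZMod p)

/-- The canonical involution of the group algebra, sending `σ^i` to `σ^{-i}`. -/
noncomputable def conjQCp (p : ℕ) :
    MonoidAlgebra ℚ (Cp p) →+* MonoidAlgebra ℚ (Cp p) :=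
  MonoidAlgebra.mapDomainRingHom ℚ (invMonoidHom : Cp p →* Cp p)

/-- The regular trace of the `p`-dimensional `ℚ`-algebra `ℚC_p`. -/
noncomputable def trReg (p : ℕ) (x : MonoidAlgebra ℚ (Cp p)) : ℚ :=
  LinearMap.trace ℚ (MonoidAlgebra ℚ (Cp p)) (LinearMap.mulLeft ℚ x)

/-- The bilinear form `b(x,y) = (1/p)·Tr_reg(x·ȳ)` on `ℚC_p`. -/
noncomputable def formB (p : ℕ) (x y : MonoidAlgebra ℚ (Cp p)) : ℚ :=
  (p : ℚ)⁻¹ * trReg p (x * conjQCp p y)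


def Zsub (p : ℕ) [Fact p.Prime] : Subring ℚ where
  carrier := {x : ℚ | ¬ (p ∣ x.den)}
  zero_mem' := by simp [Nat.Prime.ne_one (Fact.out (p := p.Prime))]
  one_mem' := by simp [Nat.Prime.ne_one (Fact.out (p := p.Prime))]
  add_mem' := by
    intro a b ha hb hd
    rcases (Nat.Prime.dvd_mul (Fact.out (p := p.Prime))).1
      (hd.trans (Rat.add_den_dvd a b)) with h | h
    exacts [ha h, hb h]
  mul_mem' := by
    intro a b ha hb hd
    rcases (Nat.Prime.dvd_mul (Fact.out (p := p.Prime))).1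
      (hd.trans (Rat.mul_den_dvd a b)) with h | h
    exacts [ha h, hb h]
  neg_mem' := by intro a ha; simpa using ha

noncomputable instance zsubModule (p : ℕ) [Fact p.Prime] (V : Type*) [AddCommGroup V]
    [Module ℚ V] : Module (Zsub p) V :=
  Module.compHom V (algebraMap (Zsub p) ℚ)

/-- The standard lattice `R = ℤ_(p) C_p` inside `ℚC_p`, the `ℤ_(p)`-span of the
group elements. -/
noncomputable def Rlat (p : ℕ) [Fact p.Prime] :
    Submodule (Zsub p) (MonoidAlgebra ℚ (Cp p)) :=
  Submodule.span (Zsub p) (Set.range (MonoidAlgebra.of ℚ (Cp p)))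


/-- A fixed generator of `Cp p`. -/
def sigmaGen (p : ℕ) : Cp p := Multiplicative.ofAdd (1 : ZMod p)

/-- The norm element `1 + σ + ⋯ + σ^{p-1} = p·e₁` of `ℚC_p`. -/
noncomputable def normElQ (p : ℕ) [Fact p.Prime] : MonoidAlgebra ℚ (Cp p) :=
  ∑ g : Cp p, MonoidAlgebra.of ℚ (Cp p) g

/-- The Hermitian form on `(ℚC_p)²` with Gram matrix
`[[p·e₁, 1-σ], [1-σ⁻¹, p·e₁]]`. -/
noncomputable def hermForm2 (p : ℕ) [Fact p.Prime]
    (x y : Fin 2 → MonoidAlgebra ℚ (Cp p)) : MonoidAlgebra ℚ (Cp p) :=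
  ∑ i, ∑ j, x i *
    (MonoidAlgebra.mapDomainRingHom ℚ (invMonoidHom : Cp p →* Cp p)) (y j) *
    (!![normElQ p, 1 - MonoidAlgebra.of ℚ (Cp p) (sigmaGen p);
        1 - MonoidAlgebra.of ℚ (Cp p) (sigmaGen p)⁻¹, normElQ p] i j)

noncomputable def mbasis (p : ℕ) : Module.Basis (Cp p) ℚ (MonoidAlgebra ℚ (Cp p)) :=
  MonoidAlgebra.basis (Cp p) ℚ

lemma trReg_apply (p : ℕ) [Fact p.Prime] (z : MonoidAlgebra ℚ (Cp p)) :
    trReg p z = p * z.coeff 1 := by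
  rw [trReg, LinearMap.trace_eq_matrix_trace ℚ (mbasis p)]
  have h : ∀ g : Cp p, (LinearMap.toMatrix (mbasis p) (mbasis p)
      (LinearMap.mulLeft ℚ z)) g g = z.coeff 1 := by
    intro g
    rw [LinearMap.toMatrix_apply]
    show ((z * MonoidAlgebra.single g 1 : MonoidAlgebra ℚ (Cp p))).coeff g = z.coeff 1
    rw [MonoidAlgebra.coeff_mul_single_apply]
    simp
  rw [Matrix.trace]
  simp only [Matrix.diag_apply, h]
  simp [Finset.card_univ, ZMod.card]
open MonoidAlgebra Multiplicative

lemma conj_single (p : ℕ) [Fact p.Prime] (g : Cp p) (c : ℚ) :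
    conjQCp p (MonoidAlgebra.single g c) = MonoidAlgebra.single g⁻¹ c := by
  simp [conjQCp, MonoidAlgebra.mapDomainRingHom, Finsupp.mapDomain_single]

lemma normElQ_apply (p : ℕ) [Fact p.Prime] (h : Cp p) : (normElQ p).coeff h = 1 := by
  rw [normElQ, MonoidAlgebra.coeff_sum]
  show ((∑ g : Cp p, Finsupp.single g (1:ℚ)) : (Cp p) →₀ ℚ) h = 1
  rw [Finsupp.finset_sum_apply]
  rw [Finset.sum_eq_single h] <;> simp [Finsupp.single_apply]

lemma mul_normElQ_apply_one (p : ℕ) [Fact p.Prime] (z : MonoidAlgebra ℚ (Cp p)) :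
    (z * normElQ p).coeff 1 = ∑ g : Cp p, z.coeff g := by
  rw [normElQ, Finset.mul_sum, MonoidAlgebra.coeff_sum]
  show ((∑ g : Cp p, (z * MonoidAlgebra.single g (1:ℚ)).coeff) : (Cp p) →₀ ℚ) 1 = _
  rw [Finsupp.finset_sum_apply]
  refine Fintype.sum_equiv (Equiv.inv (Cp p)) _ _ ?_
  intro g
  show (z * MonoidAlgebra.single g (1:ℚ)).coeff 1 = z.coeff g⁻¹
  rw [MonoidAlgebra.coeff_mul_single_apply]
  simp
lemma zsub_smul_eq (p : ℕ) [Fact p.Prime] (c : Zsub p) (z : MonoidAlgebra ℚ (Cp p)) :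
    c • z = (c : ℚ) • z := rfl

lemma coeff_mem_of_mem_Rlat (p : ℕ) [Fact p.Prime] {z : MonoidAlgebra ℚ (Cp p)}
    (hz : z ∈ Rlat p) (g : Cp p) : z.coeff g ∈ Zsub p := by
  induction hz using Submodule.span_induction with
  | mem w hw =>
    obtain ⟨h, rfl⟩ := hw
    show (Finsupp.single h (1:ℚ) : (Cp p) →₀ ℚ) g ∈ Zsub p
    rw [Finsupp.single_apply]
    split <;> simp [Subring.one_mem, Subring.zero_mem]
  | zero => show (0 : ℚ) ∈ Zsub p; exact zero_mem _
  | add u v _ _ hu hv =>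
    show ((u.coeff + v.coeff : (Cp p) →₀ ℚ)) g ∈ Zsub p
    rw [Finsupp.add_apply]; exact add_mem hu hv
  | smul c u _ hu =>
    show ((c:ℚ) • u).coeff g ∈ Zsub p
    show ((c : ℚ) • (u.coeff : (Cp p) →₀ ℚ)) g ∈ Zsub p
    rw [Finsupp.smul_apply, smul_eq_mul]
    exact mul_mem c.2 hu
lemma ma_add_apply (p : ℕ) [Fact p.Prime] (a b : MonoidAlgebra ℚ (Cp p)) (g : Cp p) :
    (a + b).coeff g = a.coeff g + b.coeff g := Finsupp.add_apply a.coeff b.coeff g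

lemma ma_smul_apply (p : ℕ) [Fact p.Prime] (c : ℚ) (a : MonoidAlgebra ℚ (Cp p)) (g : Cp p) :
    (c • a).coeff g = c * a.coeff g := Finsupp.smul_apply c a.coeff g

lemma conj_smul (p : ℕ) [Fact p.Prime] (c : ℚ) (z : MonoidAlgebra ℚ (Cp p)) :
    conjQCp p (c • z) = c • conjQCp p z := by
  show MonoidAlgebra.mapDomain _ (c • z) = c • MonoidAlgebra.mapDomain _ z
  exact MonoidAlgebra.mapDomain_smul _ c z

lemma psi_mem (p : ℕ) [Fact p.Prime] (u v c d : MonoidAlgebra ℚ (Cp p))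
    (h : ∀ g : Cp p,
      ((u * MonoidAlgebra.single g⁻¹ 1 * c + v * MonoidAlgebra.single g⁻¹ 1 * d :
        MonoidAlgebra ℚ (Cp p))).coeff 1 ∈ Zsub p)
    {z : MonoidAlgebra ℚ (Cp p)} (hz : z ∈ Rlat p) :
    (u * conjQCp p z * c + v * conjQCp p z * d).coeff 1 ∈ Zsub p := by
  induction hz using Submodule.span_induction with
  | mem w hw =>
    obtain ⟨g, rfl⟩ := hw
    rw [show ((MonoidAlgebra.of ℚ (Cp p)) g) = MonoidAlgebra.single g (1:ℚ) from rfl,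
      conj_single]
    exact h g
  | zero => simpa using zero_mem (Zsub p)
  | add a b _ _ ha hb =>
    have e : (u * conjQCp p (a + b) * c + v * conjQCp p (a + b) * d)
        = (u * conjQCp p a * c + v * conjQCp p a * d)
          + (u * conjQCp p b * c + v * conjQCp p b * d) := by
      rw [map_add]; ring
    rw [e, ma_add_apply]
    exact add_mem ha hb
  | smul r a _ ha =>
    show (u * conjQCp p ((r:ℚ) • a) * c + v * conjQCp p ((r:ℚ) • a) * d).coeff 1 ∈ Zsub p
    rw [conj_smul]
    have e : (u * ((r:ℚ) • conjQCp p a) * c + v * ((r:ℚ) • conjQCp p a) * d)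
        = (r:ℚ) • (u * conjQCp p a * c + v * conjQCp p a * d) := by
      rw [smul_add, mul_smul_comm, mul_smul_comm, smul_mul_assoc, smul_mul_assoc]
    rw [e, ma_smul_apply]
    exact mul_mem r.2 ha
noncomputable def aW (p : ℕ) [Fact p.Prime] : MonoidAlgebra ℚ (Cp p) :=
  ((p:ℚ)^2)⁻¹ • normElQ p

noncomputable def bW (p : ℕ) [Fact p.Prime] : MonoidAlgebra ℚ (Cp p) :=
  ∑ g : Cp p, (((2 * ((Multiplicative.toAdd g).val : ℚ)) - (p-1)) / (2*p)) •
    MonoidAlgebra.of ℚ (Cp p) g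

lemma aW_apply (p : ℕ) [Fact p.Prime] (g : Cp p) : (aW p).coeff g = ((p:ℚ)^2)⁻¹ := by
  rw [aW, ma_smul_apply, normElQ_apply, mul_one]

lemma bW_apply (p : ℕ) [Fact p.Prime] (g : Cp p) :
    (bW p).coeff g = ((2 * ((Multiplicative.toAdd g).val : ℚ)) - (p-1)) / (2*p) := by
  rw [bW, MonoidAlgebra.coeff_sum]
  show ((∑ h : Cp p, _ • Finsupp.single h (1:ℚ)) : (Cp p) →₀ ℚ) g = _
  rw [Finsupp.finset_sum_apply]
  rw [Finset.sum_eq_single g]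
  · rw [Finsupp.smul_apply, Finsupp.single_apply, if_pos rfl, smul_eq_mul, mul_one]
  · intro h _ hne
    rw [Finsupp.smul_apply, Finsupp.single_apply, if_neg hne, smul_zero]
  · simp

lemma sum_val (p : ℕ) [Fact p.Prime] :
    ∑ t : ZMod p, ((t.val : ℚ)) = p * (p-1) / 2 := by
  have h := Finset.sum_range_id_mul_two p
  have : ∑ t : ZMod p, ((t.val : ℚ)) = ∑ i ∈ Finset.range p, (i : ℚ) := by
    refine Finset.sum_nbij' (fun t => t.val) (fun i => (i : ZMod p)) ?_ ?_ ?_ ?_ ?_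
    · intro t _; exact Finset.mem_range.mpr t.val_lt
    · intro i _; exact Finset.mem_univ _
    · intro t _; exact ZMod.natCast_zmod_val t
    · intro i hi; exact ZMod.val_cast_of_lt (Finset.mem_range.mp hi)
    · intro t _; rfl
  rw [this]
  have hp1 : (1:ℕ) ≤ p := (Fact.out (p := p.Prime)).one_lt.le
  have hq := congrArg (Nat.cast : ℕ → ℚ) h
  push_cast [Nat.cast_sub hp1] at hq ⊢
  linarith
lemma ma_sub_apply (p : ℕ) [Fact p.Prime] (a b : MonoidAlgebra ℚ (Cp p)) (g : Cp p) :
    (a - b).coeff g = a.coeff g - b.coeff g := Finsupp.sub_apply a.coeff b.coeff g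

lemma sum_bW (p : ℕ) [Fact p.Prime] : ∑ g : Cp p, (bW p).coeff g = 0 := by
  have e : ∑ g : Cp p, (bW p).coeff g
      = ∑ t : ZMod p, ((2 * ((t.val : ℚ))) - (p-1)) / (2*p) := by
    refine Fintype.sum_equiv Multiplicative.toAdd _ _ ?_
    intro g; rw [bW_apply]
  rw [e, ← Finset.sum_div, Finset.sum_sub_distrib, ← Finset.mul_sum, sum_val,
    Finset.sum_const, Finset.card_univ, ZMod.card, nsmul_eq_mul]
  have : 2 * ((p:ℚ) * (p-1) / 2) - p * (p-1) = 0 := by ring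
  rw [this, zero_div]

lemma zsub_key (p : ℕ) [Fact p.Prime] (t : ZMod p) :
    (1 + (t.val:ℚ) - ((t+1).val:ℚ)) / p ∈ Zsub p := by
  by_cases h : t.val + 1 < p
  · have hv : (t+1).val = t.val + 1 := by
      have ht : ((t.val + 1 : ℕ) : ZMod p) = t + 1 := by
        rw [Nat.cast_add, Nat.cast_one, ZMod.natCast_zmod_val]
      rw [← ht, ZMod.val_cast_of_lt h]
    rw [hv]
    have e : (1 + (t.val:ℚ) - ((t.val + 1 : ℕ):ℚ)) / p = 0 := by
      rw [Nat.cast_add, Nat.cast_one]; ring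
    rw [e]
    exact zero_mem (Zsub p)
  · have hlt := t.val_lt
    have hval : t.val = p - 1 := by omega
    have h1 : (1:ℕ) ≤ p := (Fact.out (p := p.Prime)).one_lt.le
    have ht1 : t + 1 = 0 := by
      have h2 : t = ((p - 1 : ℕ) : ZMod p) := by rw [← hval, ZMod.natCast_zmod_val]
      have e2 : ((p - 1 : ℕ) : ZMod p) + 1 = ((p - 1 + 1 : ℕ) : ZMod p) := by
        rw [Nat.cast_add, Nat.cast_one]
      rw [h2, e2, show p - 1 + 1 = p from by omega, ZMod.natCast_self]
    rw [ht1, ZMod.val_zero, hval]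
    have hp : (p:ℚ) ≠ 0 := Nat.cast_ne_zero.mpr (Fact.out (p := p.Prime)).ne_zero
    have e3 : (1 + ((p - 1 : ℕ):ℚ) - ((0:ℕ):ℚ)) / p = 1 := by
      rw [Nat.cast_sub h1, Nat.cast_zero, Nat.cast_one]
      field_simp
      ring
    rw [e3]
    exact one_mem (Zsub p)
lemma psi0_gen (p : ℕ) [Fact p.Prime] (g : Cp p) :
    ((aW p * MonoidAlgebra.single g⁻¹ 1 * normElQ p
      + bW p * MonoidAlgebra.single g⁻¹ 1
        * (1 - MonoidAlgebra.of ℚ (Cp p) (sigmaGen p)⁻¹) : MonoidAlgebra ℚ (Cp p))).coeff 1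
      ∈ Zsub p := by
  have hp : (p:ℚ) ≠ 0 := Nat.cast_ne_zero.mpr (Fact.out (p := p.Prime)).ne_zero
  rw [ma_add_apply]
  have t1 : (aW p * MonoidAlgebra.single g⁻¹ 1 * normElQ p : MonoidAlgebra ℚ (Cp p)).coeff 1 = (p:ℚ)⁻¹ := by
    rw [mul_normElQ_apply_one]
    have e : ∀ h : Cp p, (aW p * MonoidAlgebra.single g⁻¹ 1 : MonoidAlgebra ℚ (Cp p)).coeff h = ((p:ℚ)^2)⁻¹ := by
      intro h
      rw [MonoidAlgebra.coeff_mul_single_apply, aW_apply, mul_one]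
    rw [Finset.sum_congr rfl (fun h _ => e h), Finset.sum_const, Finset.card_univ,
      show Fintype.card (Cp p) = p from by rw [Fintype.card_multiplicative, ZMod.card],
      nsmul_eq_mul, sq, mul_inv, ← mul_assoc, mul_inv_cancel₀ hp, one_mul]
  have t2 : (bW p * MonoidAlgebra.single g⁻¹ 1
      * (1 - MonoidAlgebra.of ℚ (Cp p) (sigmaGen p)⁻¹) : MonoidAlgebra ℚ (Cp p)).coeff 1
      = (bW p).coeff g - (bW p).coeff (g * sigmaGen p) := by
    rw [mul_sub, mul_one, ma_sub_apply]
    congr 1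
    · rw [MonoidAlgebra.coeff_mul_single_apply]
      simp
    · rw [show (MonoidAlgebra.of ℚ (Cp p) (sigmaGen p)⁻¹)
        = MonoidAlgebra.single (sigmaGen p)⁻¹ (1:ℚ) from rfl,
        mul_assoc, MonoidAlgebra.single_mul_single, MonoidAlgebra.coeff_mul_single_apply]
      rw [one_mul, one_mul]
      simp [mul_inv_rev, mul_comm]
  rw [t1, t2, bW_apply, bW_apply]
  have ht : Multiplicative.toAdd (g * sigmaGen p) = Multiplicative.toAdd g + 1 := by
    simp [sigmaGen]
  rw [ht]
  set t := Multiplicative.toAdd g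
  have e2 : (p:ℚ)⁻¹ + ((2 * ((t.val : ℚ)) - (p-1)) / (2*p)
      - (2 * (((t+1).val : ℚ)) - (p-1)) / (2*p))
      = (1 + (t.val:ℚ) - ((t+1).val:ℚ)) / p := by
    field_simp
    ring
  rw [e2]
  exact zsub_key p t

lemma psi1_gen (p : ℕ) [Fact p.Prime] (g : Cp p) :
    ((aW p * MonoidAlgebra.single g⁻¹ 1
        * (1 - MonoidAlgebra.of ℚ (Cp p) (sigmaGen p))
      + bW p * MonoidAlgebra.single g⁻¹ 1 * normElQ p : MonoidAlgebra ℚ (Cp p))).coeff 1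
      ∈ Zsub p := by
  rw [ma_add_apply]
  have t1 : (aW p * MonoidAlgebra.single g⁻¹ 1
      * (1 - MonoidAlgebra.of ℚ (Cp p) (sigmaGen p)) : MonoidAlgebra ℚ (Cp p)).coeff 1 = 0 := by
    rw [mul_sub, mul_one, ma_sub_apply]
    rw [show (MonoidAlgebra.of ℚ (Cp p) (sigmaGen p))
        = MonoidAlgebra.single (sigmaGen p) (1:ℚ) from rfl,
      mul_assoc, MonoidAlgebra.single_mul_single, MonoidAlgebra.coeff_mul_single_apply,
      MonoidAlgebra.coeff_mul_single_apply, aW_apply, aW_apply]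
    ring
  have t2 : (bW p * MonoidAlgebra.single g⁻¹ 1 * normElQ p : MonoidAlgebra ℚ (Cp p)).coeff 1 = 0 := by
    rw [mul_normElQ_apply_one]
    have e : ∀ h : Cp p, (bW p * MonoidAlgebra.single g⁻¹ 1 : MonoidAlgebra ℚ (Cp p)).coeff h = (bW p).coeff (h * g) := by
      intro h
      rw [MonoidAlgebra.coeff_mul_single_apply, inv_inv, mul_one]
    rw [Finset.sum_congr rfl (fun h _ => e h)]
    exact (Fintype.sum_equiv (Equiv.mulRight g) _ (fun h => (bW p).coeff h) (fun h => rfl)).trans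
      (sum_bW p)
  rw [t1, t2]
  simpa using zero_mem (Zsub p)
/-- The free `R`-lattice `L = Rg₁ ⊕ Rg₂` of rank 2 with Hermitian
Gram matrix `[[p·e₁, 1-σ], [1-σ^{-1}, p·e₁]]`, carrying the bilinear form
`B = (1/p)·Tr_reg ∘ h`, is not elementary: `pL^#` is not contained in `L`. -/
theorem stmt18 (p : ℕ) [Fact p.Prime] :
    ¬ (∀ x : Fin 2 → MonoidAlgebra ℚ (Cp p),
        (∀ l : Fin 2 → MonoidAlgebra ℚ (Cp p), (∀ i, l i ∈ Rlat p) →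
            (p : ℚ)⁻¹ * trReg p (hermForm2 p x l) ∈ Zsub p) →
        ∀ i, (p : ℚ) • x i ∈ Rlat p) := by
  intro H
  have hp : (p:ℚ) ≠ 0 := Nat.cast_ne_zero.mpr (Fact.out (p := p.Prime)).ne_zero
  set x : Fin 2 → MonoidAlgebra ℚ (Cp p) := ![aW p, bW p] with hx
  have hdual : ∀ l : Fin 2 → MonoidAlgebra ℚ (Cp p), (∀ i, l i ∈ Rlat p) →
      (p : ℚ)⁻¹ * trReg p (hermForm2 p x l) ∈ Zsub p := by
    intro l hl
    rw [trReg_apply, show (p:ℚ)⁻¹ * (p * (hermForm2 p x l).coeff 1) = (hermForm2 p x l).coeff 1 by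
      rw [← mul_assoc, inv_mul_cancel₀ hp, one_mul]]
    have hherm : hermForm2 p x l =
        (aW p * conjQCp p (l 0) * normElQ p
          + bW p * conjQCp p (l 0) * (1 - MonoidAlgebra.of ℚ (Cp p) (sigmaGen p)⁻¹))
        + (aW p * conjQCp p (l 1) * (1 - MonoidAlgebra.of ℚ (Cp p) (sigmaGen p))
          + bW p * conjQCp p (l 1) * normElQ p) := by
      rw [hermForm2, Fin.sum_univ_two, Fin.sum_univ_two, Fin.sum_univ_two]
      simp only [hx, conjQCp]
      simp
      ring
    rw [hherm, ma_add_apply]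
    exact add_mem
      (psi_mem p (aW p) (bW p) (normElQ p) _ (psi0_gen p) (hl 0))
      (psi_mem p (aW p) (bW p) _ (normElQ p) (psi1_gen p) (hl 1))
  have hmem := H x hdual 0
  have hx0 : x 0 = aW p := rfl
  rw [hx0] at hmem
  have hc := coeff_mem_of_mem_Rlat p hmem 1
  rw [ma_smul_apply, aW_apply] at hc
  have e : (p:ℚ) * ((p:ℚ)^2)⁻¹ = (p:ℚ)⁻¹ := by
    rw [sq, mul_inv, ← mul_assoc, mul_inv_cancel₀ hp, one_mul]
  rw [e] at hc
  refine hc ?_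
  rw [Rat.inv_natCast_den_of_pos (Fact.out (p := p.Prime)).pos]
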